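/- Let P = {x ∈ ℝⁿ : Ax = b, Bx ≤ d} be a pointed integral polyhedron whose stacked constraint matrix (A; B) is totally unimodular. If P is a 0/1-polytope, i.e., all vertices of P lie in {0,1}ⁿ and P is bounded, then every circuit walk in P is a vertex walk. -/

import Mathlib

/-!
STATEMENT 3: In a pointed integral polyhedron P = {x : A x = b, B x ≤ d} whose stacked
constraint matrix (A; B) is totally unimodular and which is a 0/1-polytope, every circuit
walk is a vertex walk.
-/

open Matrix

/-- The polyhedron `{x ∈ ℝⁿ : A x = b, B x ≤ d}`. -/
def PolyAB {mA mB n : ℕ} (A : Matrix (Fin mA) (Fin n) ℝ) (b : Fin mA → ℝ)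
    (B : Matrix (Fin mB) (Fin n) ℝ) (d : Fin mB → ℝ) : Set (Fin n → ℝ) :=
  {x | A.mulVec x = b ∧ ∀ i, B.mulVec x i ≤ d i}

/-- A real vector with integer components whose greatest common divisor is 1. -/
def IsCoprimeIntegerVec {n : ℕ} (g : Fin n → ℝ) : Prop :=
  ∃ gz : Fin n → ℤ, (∀ i, g i = (gz i : ℝ)) ∧ Finset.univ.gcd gz = 1

/-- `g` is a circuit of the system `A x = b`, `B x ≤ d`:  `g ∈ ker A \ {0}` with coprime integer
components such that `B g` is support-minimal over `{B x : x ∈ ker A \ {0}}`. -/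
def IsCircuit {mA mB n : ℕ} (A : Matrix (Fin mA) (Fin n) ℝ)
    (B : Matrix (Fin mB) (Fin n) ℝ) (g : Fin n → ℝ) : Prop :=
  A.mulVec g = 0 ∧ g ≠ 0 ∧ IsCoprimeIntegerVec g ∧
    ¬ ∃ y : Fin n → ℝ, A.mulVec y = 0 ∧ y ≠ 0 ∧
      {i | B.mulVec y i ≠ 0} ⊂ {i | B.mulVec g i ≠ 0}

/-- A circuit walk: a sequence of points of `P` starting and ending at vertices,
each step a maximal step along a circuit direction. -/
def IsCircuitWalk {n : ℕ} (P : Set (Fin n → ℝ)) (Circ : (Fin n → ℝ) → Prop)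
    {k : ℕ} (y : Fin (k + 1) → Fin n → ℝ) : Prop :=
  y 0 ∈ P.extremePoints ℝ ∧ y (Fin.last k) ∈ P.extremePoints ℝ ∧
  ∀ i : Fin k, y i.castSucc ∈ P ∧
    ∃ (g : Fin n → ℝ) (α : ℝ), Circ g ∧ 0 < α ∧
      y i.succ = y i.castSucc + α • g ∧
      ∀ β : ℝ, α < β → y i.castSucc + β • g ∉ P


/-- A circuit walk is a vertex walk if all of its points are vertices of `P`. -/
def IsVertexWalk {n : ℕ} (P : Set (Fin n → ℝ)) {k : ℕ} (y : Fin (k + 1) → Fin n → ℝ) : Prop :=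
  ∀ i, y i ∈ P.extremePoints ℝ

section CircuitWalkHelpers

open Set

variable {mA mB n : ℕ}

lemma dot_single {n : Type*} [Fintype n] [DecidableEq n] (j : n) (x : n → ℝ) :
    Pi.single j 1 ⬝ᵥ x = x j := by
  rw [single_dotProduct, one_mul]

lemma dot_span_zero {C : Type*} [Fintype C] (t : Set (C → ℝ)) (x : C → ℝ)
    (h : ∀ v ∈ t, v ⬝ᵥ x = 0) : ∀ v ∈ Submodule.span ℝ t, v ⬝ᵥ x = 0 := by
  intro v hv
  induction hv using Submodule.span_induction with
  | mem v hv => exact h v hv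
  | zero => rw [zero_dotProduct]
  | add v w _ _ hv hw => rw [add_dotProduct, hv, hw, add_zero]
  | smul c v _ hv => rw [smul_dotProduct, hv, smul_zero]

lemma tu_ker_unit {R C : Type*} [Fintype R] [Fintype C] [DecidableEq R] [DecidableEq C]
    (M : Matrix R C ℝ) (hM : M.IsTotallyUnimodular) (u : C → ℝ) (hu : u ≠ 0)
    (huk : M.mulVec u = 0)
    (hker : ∀ x : C → ℝ, M.mulVec x = 0 → ∃ c : ℝ, x = c • u) :
    ∃ (h : C → ℝ) (c : ℝ), c ≠ 0 ∧ u = c • h ∧ ∀ j, h j = 0 ∨ h j = 1 ∨ h j = -1 := by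
  classical
  set rows : Set (C → ℝ) := Set.range (fun r : R => M r) with hrows
  obtain ⟨t, hts, hspan, hind⟩ := exists_linearIndependent ℝ rows
  obtain ⟨j0, hj0⟩ : ∃ j0, u j0 ≠ 0 := by
    by_contra hco; push_neg at hco; exact hu (funext fun j => hco j)
  set e : C → ℝ := Pi.single j0 1 with he
  have hrowu : ∀ r : R, M r ⬝ᵥ u = 0 := fun r => congrFun huk r
  have htu : ∀ v ∈ t, v ⬝ᵥ u = 0 := by
    intro v hv
    obtain ⟨r, rfl⟩ := hts hv
    exact hrowu r
  have hker0 : ∀ x : C → ℝ, (∀ v ∈ insert e t, v ⬝ᵥ x = 0) → x = 0 := by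
    intro x hx
    have hMx : M.mulVec x = 0 := by
      funext r
      have h1 : M r ∈ Submodule.span ℝ t := by
        rw [hspan]; exact Submodule.subset_span ⟨r, rfl⟩
      exact dot_span_zero t x (fun v hv => hx v (Set.mem_insert_of_mem _ hv)) _ h1
    obtain ⟨c, rfl⟩ := hker x hMx
    have hx0 : e ⬝ᵥ (c • u) = 0 := hx e (Set.mem_insert _ _)
    rw [dotProduct_smul, he, dot_single] at hx0
    rcases mul_eq_zero.mp hx0 with hc | hc
    · rw [show (c : ℝ) = 0 from hc, zero_smul]
    · exact absurd hc hj0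
  have hfin : t.Finite := hind.setFinite
  have hePspan : e ∉ Submodule.span ℝ t := by
    intro hce
    have h2 := dot_span_zero t u htu e hce
    rw [he, dot_single] at h2
    exact hj0 h2
  have huPspan : u ∉ Submodule.span ℝ t := by
    intro hcu
    have h2 := dot_span_zero t u htu u hcu
    rw [dotProduct_self_eq_zero] at h2
    exact hu h2
  have het : e ∉ t := fun hh => hePspan (Submodule.subset_span hh)
  have hut : u ∉ t := fun hh => huPspan (Submodule.subset_span hh)
  have hinde : LinearIndependent ℝ (Subtype.val : ↥(insert e t : Set (C → ℝ)) → C → ℝ) :=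
    LinearIndepOn.id_insert hind hePspan
  have hindu : LinearIndependent ℝ (Subtype.val : ↥(insert u t : Set (C → ℝ)) → C → ℝ) :=
    LinearIndepOn.id_insert hind huPspan
  haveI : Fintype t := hfin.fintype
  haveI : Fintype (insert e t : Set (C → ℝ)) := (hfin.insert e).fintype
  haveI : Fintype (insert u t : Set (C → ℝ)) := (hfin.insert u).fintype
  have hcard_u : (insert u t : Set (C → ℝ)).ncard ≤ Fintype.card C := by
    have h2 := hindu.fintype_card_le_finrank
    rw [Module.finrank_fintype_fun_eq_card] at h2
    rw [← Nat.card_coe_set_eq, Nat.card_eq_fintype_card]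
    exact h2
  have hcard_e_ge : Fintype.card C ≤ (insert e t : Set (C → ℝ)).ncard := by
    set D0 : Matrix (insert e t : Set (C → ℝ)) C ℝ := Matrix.of (fun r j => (r : C → ℝ) j)
      with hD0
    have hinj : Function.Injective D0.mulVecLin := by
      rw [← LinearMap.ker_eq_bot, LinearMap.ker_eq_bot']
      intro x hx
      apply hker0 x
      intro v hv
      have h3 := congrFun hx ⟨v, hv⟩
      simpa [Matrix.mulVecLin_apply, Matrix.mulVec, hD0] using h3
    have h4 := LinearMap.finrank_le_finrank_of_injective hinj
    rw [Module.finrank_fintype_fun_eq_card, Module.finrank_fintype_fun_eq_card] at h4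
    rw [← Nat.card_coe_set_eq, Nat.card_eq_fintype_card]
    exact h4
  have hncard_eq : (insert e t : Set (C → ℝ)).ncard = (insert u t : Set (C → ℝ)).ncard := by
    rw [Set.ncard_insert_of_notMem het hfin, Set.ncard_insert_of_notMem hut hfin]
  have hcard : Fintype.card (insert e t : Set (C → ℝ)) = Fintype.card C := by
    rw [← Nat.card_eq_fintype_card, Nat.card_coe_set_eq]
    omega
  set eqv : (insert e t : Set (C → ℝ)) ≃ C := Fintype.equivOfCardEq hcard with heqv
  -- row picker into fromRows M 1
  have hpick : ∀ r : (insert e t : Set (C → ℝ)), ∃ q : R ⊕ C,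
      ∀ j, (fromRows M (1 : Matrix C C ℝ)) q j = (r : C → ℝ) j := by
    rintro ⟨r, hr⟩
    rcases Set.mem_insert_iff.mp hr with hh | hh
    · refine ⟨Sum.inr j0, fun j => ?_⟩
      rw [Matrix.fromRows_apply_inr]
      subst hh
      simp [he, Matrix.one_apply, Pi.single_apply, eq_comm]
    · obtain ⟨i, hi⟩ := hts hh
      refine ⟨Sum.inl i, fun j => ?_⟩
      rw [Matrix.fromRows_apply_inl]
      exact congrFun hi j
  choose pick hpickspec using hpick
  set D : Matrix C C ℝ := Matrix.of (fun i j => ((eqv.symm i : C → ℝ)) j) with hD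
  have hDsub : D = (fromRows M (1 : Matrix C C ℝ)).submatrix (fun i => pick (eqv.symm i)) id := by
    ext i j
    simp only [Matrix.submatrix_apply, id_eq]
    rw [hpickspec (eqv.symm i) j]
    rfl
  have hDTU : D.IsTotallyUnimodular := by
    rw [hDsub]
    exact (hM.fromRows_one).submatrix _ _
  have hDrow : ∀ (x : C → ℝ) (v : (insert e t : Set (C → ℝ))),
      D.mulVec x (eqv v) = (v : C → ℝ) ⬝ᵥ x := by
    intro x v
    simp [Matrix.mulVec, hD, Equiv.symm_apply_apply]
  have hDker : ∀ x : C → ℝ, D.mulVec x = 0 → x = 0 := by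
    intro x hx
    apply hker0 x
    intro v hv
    have h3 := congrFun hx (eqv ⟨v, hv⟩)
    rwa [hDrow x ⟨v, hv⟩] at h3
  have hdet0 : D.det ≠ 0 := by
    intro h0
    obtain ⟨x, hx0, hxk⟩ := (Matrix.exists_mulVec_eq_zero_iff).mpr h0
    exact hx0 (hDker x hxk)
  have hdetD : D.det = 1 ∨ D.det = -1 := by
    obtain ⟨s, hs⟩ := (Matrix.isTotallyUnimodular_iff_fintype D).mp hDTU C id id
    rw [Matrix.submatrix_id_id] at hs
    rcases s with _ | _ | _
    · exfalso; apply hdet0; rw [← hs]; rfl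
    · right; rw [← hs]; rfl
    · left; rw [← hs]; rfl
  have hdetunit : IsUnit D.det := isUnit_iff_ne_zero.mpr hdet0
  set r0 : C := eqv ⟨e, Set.mem_insert _ _⟩ with hr0
  set h : C → ℝ := D⁻¹.mulVec (Pi.single r0 1) with hh
  have hDh : D.mulVec h = Pi.single r0 1 := by
    rw [hh, Matrix.mulVec_mulVec, Matrix.mul_nonsing_inv _ hdetunit, Matrix.one_mulVec]
  have hentry : ∀ j, h j = 0 ∨ h j = 1 ∨ h j = -1 := by
    intro j
    have h1 : h j = D⁻¹ j r0 := by
      rw [hh, Matrix.mulVec_single]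
      exact mul_one _
    have h2 : D⁻¹ j r0 = D.det⁻¹ * D.adjugate j r0 := by
      rw [Matrix.inv_def]
      simp [Ring.inverse_eq_inv']
    have h4 : D.updateRow r0 (Pi.single j 1) =
        (fromRows M (1 : Matrix C C ℝ)).submatrix
          (Function.update (fun i => pick (eqv.symm i)) r0 (Sum.inr j)) id := by
      ext i jj
      rcases eq_or_ne i r0 with rfl | hne
      · rw [Matrix.updateRow_self, Matrix.submatrix_apply, Function.update_self,
          Matrix.fromRows_apply_inr]
        simp [Matrix.one_apply, Pi.single_apply, eq_comm]
      · rw [Matrix.updateRow_ne hne]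
        simp only [Matrix.submatrix_apply, id_eq, Function.update_of_ne hne]
        rw [hpickspec (eqv.symm i) jj]
        rfl
    have h5 : D.adjugate j r0 ∈ Set.range (SignType.cast : SignType → ℝ) := by
      rw [Matrix.adjugate_apply, h4]
      exact (Matrix.isTotallyUnimodular_iff_fintype _).mp (hM.fromRows_one) C _ id
    obtain ⟨s, hs⟩ := h5
    rw [h1, h2, ← hs]
    rcases hdetD with hdd | hdd <;> rw [hdd] <;> rcases s with _ | _ | _ <;> norm_num
  have hMh : M.mulVec h = 0 := by
    have htv : ∀ v ∈ t, v ⬝ᵥ h = 0 := by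
      intro v hv
      have hne : (⟨v, Set.mem_insert_of_mem _ hv⟩ : (insert e t : Set (C → ℝ)))
          ≠ ⟨e, Set.mem_insert _ _⟩ := by
        intro hcontr
        have hve : v = e := congrArg Subtype.val hcontr
        exact het (hve ▸ hv)
      have hi : eqv ⟨v, Set.mem_insert_of_mem _ hv⟩ ≠ r0 := by
        rw [hr0]
        exact fun hc => hne (eqv.injective hc)
      have h6 := congrFun hDh (eqv ⟨v, Set.mem_insert_of_mem _ hv⟩)
      rw [hDrow h ⟨v, Set.mem_insert_of_mem _ hv⟩] at h6
      rw [h6, Pi.single_eq_of_ne hi]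
    funext r
    exact dot_span_zero t h htv _ (by rw [hspan]; exact Submodule.subset_span ⟨r, rfl⟩)
  obtain ⟨c', hc'⟩ := hker h hMh
  have hhj0 : h j0 = 1 := by
    have h6 := congrFun hDh r0
    have h7 := hDrow h ⟨e, Set.mem_insert _ _⟩
    rw [← hr0] at h7
    rw [h7, he, dot_single, Pi.single_eq_same] at h6
    exact h6
  have hc'0 : c' ≠ 0 := by
    intro hc0
    rw [hc0, zero_smul] at hc'
    rw [hc'] at hhj0
    norm_num at hhj0
  refine ⟨h, c'⁻¹, inv_ne_zero hc'0, ?_, hentry⟩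
  rw [hc', smul_smul, inv_mul_cancel₀ hc'0, one_smul]

lemma circuit_Bg_unit {mA mB n : ℕ} (A : Matrix (Fin mA) (Fin n) ℝ)
    (B : Matrix (Fin mB) (Fin n) ℝ) (g : Fin n → ℝ)
    (hTU : (Matrix.fromRows A B).IsTotallyUnimodular)
    (hgA : A.mulVec g = 0) (hgne : g ≠ 0)
    (hgint : ∃ gz : Fin n → ℤ, (∀ i, g i = (gz i : ℝ)) ∧ Finset.univ.gcd gz = 1)
    (hmin : ¬ ∃ y : Fin n → ℝ, A.mulVec y = 0 ∧ y ≠ 0 ∧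
      {i | B.mulVec y i ≠ 0} ⊂ {i | B.mulVec g i ≠ 0})
    (hBg : B.mulVec g ≠ 0) :
    ∀ i, B.mulVec g i = 0 ∨ B.mulVec g i = 1 ∨ B.mulVec g i = -1 := by
  classical
  set E : Matrix (Fin mA ⊕ Fin mB) (Fin mB) ℝ :=
    (1 : Matrix (Fin mA ⊕ Fin mB) (Fin mA ⊕ Fin mB) ℝ).submatrix id Sum.inr with hE
  set X : Matrix (Fin mA ⊕ Fin mB) (Fin n ⊕ Fin mB) ℝ :=
    Matrix.fromCols (Matrix.fromRows A B) E with hX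
  set U : Matrix (Fin mB) (Fin n ⊕ Fin mB) ℝ :=
    Matrix.of (fun i => if B.mulVec g i = 0 then Pi.single (Sum.inr i) (1:ℝ) else 0) with hU
  set M3 := Matrix.fromRows X U with hM3
  have hUapp : ∀ i, U i = if B.mulVec g i = 0 then Pi.single (Sum.inr i) (1:ℝ) else 0 :=
    fun _ => rfl
  have hXTU : X.IsTotallyUnimodular := by
    have h1 : X = (Matrix.fromCols (Matrix.fromRows A B)
        (1 : Matrix (Fin mA ⊕ Fin mB) (Fin mA ⊕ Fin mB) ℝ)).submatrix id
          (Sum.map id Sum.inr) := by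
      ext r c
      cases c with
      | inl j => rfl
      | inr i => rfl
    rw [h1]
    exact (hTU.fromCols_one).submatrix id (Sum.map id Sum.inr)
  have hM3TU : M3.IsTotallyUnimodular := by
    apply hXTU.fromRows_unitlike
    intro _ i
    by_cases hz : B.mulVec g i = 0
    · refine ⟨Sum.inr i, 1, ?_⟩
      rw [hUapp, if_pos hz]
      norm_num
    · refine ⟨Sum.inr i, 0, ?_⟩
      rw [hUapp, if_neg hz]
      simp
  set u : (Fin n ⊕ Fin mB) → ℝ := Sum.elim g (-(B.mulVec g)) with hu
  have hune : u ≠ 0 := by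
    intro h0
    apply hgne
    funext j
    exact congrFun h0 (Sum.inl j)
  -- mulVec of M3 on Sum.elim decomposition
  have hM3mul : ∀ x₁ : Fin n → ℝ, ∀ x₂ : Fin mB → ℝ,
      M3.mulVec (Sum.elim x₁ x₂) = Sum.elim
        (Sum.elim (A.mulVec x₁) (B.mulVec x₁ + x₂))
        (fun i => if B.mulVec g i = 0 then x₂ i else 0) := by
    intro x₁ x₂
    funext r
    rw [hM3]
    cases r with
    | inl r =>
      rw [Matrix.fromRows_mulVec]
      have h2 : X.mulVec (Sum.elim x₁ x₂) = (Matrix.fromRows A B).mulVec x₁ + E.mulVec x₂ := by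
        rw [hX, Matrix.fromCols_mulVec_sumElim]
      rw [Sum.elim_inl, h2]
      have h3 : E.mulVec x₂ = Sum.elim (0 : Fin mA → ℝ) x₂ := by
        funext r'
        rw [hE]
        cases r' with
        | inl a =>
          simp [Matrix.mulVec, dotProduct, Matrix.one_apply]
        | inr b =>
          simp [Matrix.mulVec, dotProduct, Matrix.one_apply]
      rw [h3, Matrix.fromRows_mulVec]
      cases r with
      | inl a => simp
      | inr b => simp
    | inr r =>
      rw [Matrix.fromRows_mulVec]
      simp only [Sum.elim_inr]
      have h7 : U.mulVec (Sum.elim x₁ x₂) r = U r ⬝ᵥ (Sum.elim x₁ x₂) := rfl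
      rw [h7, hUapp r]
      by_cases hz : B.mulVec g r = 0
      · rw [if_pos hz, if_pos hz, single_dotProduct, one_mul, Sum.elim_inr]
      · rw [if_neg hz, if_neg hz, zero_dotProduct]
  have huk : M3.mulVec u = 0 := by
    rw [hu, hM3mul]
    funext r
    cases r with
    | inl r =>
      cases r with
      | inl a => simp [hgA]
      | inr b => simp
    | inr r =>
      by_cases hz : B.mulVec g r = 0 <;> simp [hz]
  have hker : ∀ x : (Fin n ⊕ Fin mB) → ℝ, M3.mulVec x = 0 → ∃ c : ℝ, x = c • u := by
    intro x hx
    have hxe : x = Sum.elim (fun j => x (Sum.inl j)) (fun i => x (Sum.inr i)) := by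
      funext cc; cases cc <;> rfl
    set x₁ : Fin n → ℝ := fun j => x (Sum.inl j) with hx₁
    set x₂ : Fin mB → ℝ := fun i => x (Sum.inr i) with hx₂
    rw [hxe, hM3mul] at hx
    have hA1 : A.mulVec x₁ = 0 := by
      funext a; exact congrFun hx (Sum.inl (Sum.inl a))
    have hB1 : B.mulVec x₁ + x₂ = 0 := by
      funext i2; exact congrFun hx (Sum.inl (Sum.inr i2))
    have hx₂eq : x₂ = -(B.mulVec x₁) := by
      funext i2
      have := congrFun hB1 i2
      simpa [eq_neg_iff_add_eq_zero, add_comm] using this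
    have hZ : ∀ i2, B.mulVec g i2 = 0 → B.mulVec x₁ i2 = 0 := by
      intro i2 hz
      have h5 := congrFun hx (Sum.inr i2)
      simp only [Sum.elim_inr, hz, if_pos, Pi.zero_apply] at h5
      have := congrFun hx₂eq i2
      rw [h5] at this
      exact (neg_eq_zero.mp this.symm)
    -- now show x₁ is a multiple of g
    have hx₁g : ∃ c : ℝ, x₁ = c • g := by
      by_cases hx0 : x₁ = 0
      · exact ⟨0, by rw [hx0, zero_smul]⟩
      have hsub : {i | B.mulVec x₁ i ≠ 0} ⊆ {i | B.mulVec g i ≠ 0} := by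
        intro i2 hi2
        simp only [Set.mem_setOf_eq] at hi2 ⊢
        intro hz
        exact hi2 (hZ i2 hz)
      have hseq : {i | B.mulVec x₁ i ≠ 0} = {i | B.mulVec g i ≠ 0} := by
        by_contra hne
        exact hmin ⟨x₁, hA1, hx0, hsub, fun hss => hne (Set.Subset.antisymm hsub hss)⟩
      obtain ⟨i0, hi0⟩ : ∃ i0, B.mulVec g i0 ≠ 0 := by
        by_contra hco; push_neg at hco
        exact hBg (funext hco)
      set w : Fin n → ℝ := B.mulVec g i0 • x₁ - B.mulVec x₁ i0 • g with hw
      have hwA : A.mulVec w = 0 := by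
        rw [hw, Matrix.mulVec_sub, Matrix.mulVec_smul, Matrix.mulVec_smul, hA1, hgA]
        simp
      have hwB : ∀ i2, B.mulVec w i2 = B.mulVec g i0 * B.mulVec x₁ i2
          - B.mulVec x₁ i0 * B.mulVec g i2 := by
        intro i2
        rw [hw, Matrix.mulVec_sub, Matrix.mulVec_smul, Matrix.mulVec_smul]
        simp [smul_eq_mul]
      have hwsub : {i | B.mulVec w i ≠ 0} ⊂ {i | B.mulVec g i ≠ 0} := by
        constructor
        · intro i2 hi2
          simp only [Set.mem_setOf_eq] at hi2 ⊢
          intro hz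
          apply hi2
          rw [hwB i2, hZ i2 hz, hz]
          ring
        · intro hss
          have : B.mulVec w i0 ≠ 0 := hss hi0
          apply this
          rw [hwB i0]
          ring
      have hw0 : w = 0 := by
        by_contra hwne
        exact hmin ⟨w, hwA, hwne, hwsub⟩
      have hx₁eq : B.mulVec g i0 • x₁ = B.mulVec x₁ i0 • g := by
        have := sub_eq_zero.mp (hw ▸ hw0)
        exact this
      refine ⟨B.mulVec x₁ i0 / B.mulVec g i0, ?_⟩
      funext j
      have := congrFun hx₁eq j
      simp only [Pi.smul_apply, smul_eq_mul] at this
      rw [Pi.smul_apply, smul_eq_mul, div_mul_eq_mul_div, eq_div_iff hi0]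
      linear_combination this
    obtain ⟨c, hc⟩ := hx₁g
    refine ⟨c, ?_⟩
    rw [hxe]
    funext cc
    cases cc with
    | inl j => simp [hc, hu]
    | inr i2 =>
      simp only [Sum.elim_inr, Pi.smul_apply, hu, smul_eq_mul]
      rw [congrFun hx₂eq i2, hc, Matrix.mulVec_smul]
      simp only [Pi.neg_apply, Pi.smul_apply, smul_eq_mul]
      ring
  obtain ⟨h, c, hc0, hcu, hent⟩ := tu_ker_unit M3 hM3TU u hune huk hker
  obtain ⟨gz, hgz, hgcd⟩ := hgint
  obtain ⟨j1, hj1⟩ : ∃ j1, g j1 ≠ 0 := by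
    by_contra hco; push_neg at hco; exact hgne (funext hco)
  have hgj : ∀ j, g j = c * h (Sum.inl j) := by
    intro j
    have := congrFun hcu (Sum.inl j)
    simpa [hu] using this
  have hBgi : ∀ i, B.mulVec g i = -(c * h (Sum.inr i)) := by
    intro i
    have := congrFun hcu (Sum.inr i)
    simp only [hu, Sum.elim_inr, Pi.smul_apply, smul_eq_mul, Pi.neg_apply] at this
    linarith [this]
  have hc1 : c = 1 ∨ c = -1 := by
    have hhj1 : h (Sum.inl j1) = 1 ∨ h (Sum.inl j1) = -1 := by
      rcases hent (Sum.inl j1) with h0 | h1 | h2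
      · exfalso; apply hj1; rw [hgj j1, h0, mul_zero]
      · exact Or.inl h1
      · exact Or.inr h2
    have hcg : c = g j1 ∨ c = -g j1 := by
      rcases hhj1 with hh | hh
      · left; rw [hgj j1, hh, mul_one]
      · right; rw [hgj j1, hh]; ring
    have hdvd : ∀ j, gz j1 ∣ gz j := by
      intro j
      have hmain : g j = 0 ∨ g j = g j1 ∨ g j = -g j1 := by
        rcases hent (Sum.inl j) with h0 | h1 | h2
        · left; rw [hgj j, h0, mul_zero]
        · rcases hcg with hc' | hc'
          · right; left; rw [hgj j, h1, mul_one, hc']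
          · right; right; rw [hgj j, h1, mul_one, hc']
        · rcases hcg with hc' | hc'
          · right; right; rw [hgj j, h2, hc']; ring
          · right; left; rw [hgj j, h2, hc']; ring
      have hint : gz j = 0 ∨ gz j = gz j1 ∨ gz j = -gz j1 := by
        rcases hmain with h' | h' | h'
        · left; rw [hgz j] at h'; exact_mod_cast h'
        · right; left; rw [hgz j, hgz j1] at h'; exact_mod_cast h'
        · right; right; rw [hgz j, hgz j1] at h'; exact_mod_cast h'
      rcases hint with h' | h' | h' <;> rw [h']
      · exact dvd_zero _
      · exact (dvd_neg).mpr (dvd_refl _)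
    have hdg : gz j1 ∣ 1 := by
      rw [← hgcd]
      exact Finset.dvd_gcd (fun j _ => hdvd j)
    have hunit : gz j1 = 1 ∨ gz j1 = -1 := Int.isUnit_iff.mp (isUnit_of_dvd_one hdg)
    rcases hcg with hc' | hc' <;> rcases hunit with h' | h'
    · left; rw [hc', hgz j1, h']; norm_num
    · right; rw [hc', hgz j1, h']; norm_num
    · right; rw [hc', hgz j1, h']; norm_num
    · left; rw [hc', hgz j1, h']; norm_num
  intro i
  rcases hc1 with hc' | hc' <;> rcases hent (Sum.inr i) with h' | h' | h' <;>
    rw [hBgi i, hc', h'] <;> norm_num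

lemma poly_convex (A : Matrix (Fin mA) (Fin n) ℝ) (b : Fin mA → ℝ)
    (B : Matrix (Fin mB) (Fin n) ℝ) (d : Fin mB → ℝ) :
    Convex ℝ {x | A.mulVec x = b ∧ ∀ i, B.mulVec x i ≤ d i} := by
  intro x hx y hy s t hs ht hst
  constructor
  · rw [Matrix.mulVec_add, Matrix.mulVec_smul, Matrix.mulVec_smul, hx.1, hy.1,
      ← add_smul, hst, one_smul]
  · intro i
    rw [Matrix.mulVec_add, Matrix.mulVec_smul, Matrix.mulVec_smul]
    calc (s • B.mulVec x + t • B.mulVec y) i = s * B.mulVec x i + t * B.mulVec y i := rfl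
    _ ≤ s * d i + t * d i := by
        gcongr
        exacts [hx.2 i, hy.2 i]
    _ = d i := by rw [← add_mul, hst, one_mul]

lemma mulVec_continuous (M : Matrix (Fin mA) (Fin n) ℝ) (i : Fin mA) :
    Continuous fun x : Fin n → ℝ => M.mulVec x i := by
  simp only [Matrix.mulVec, dotProduct]
  exact continuous_finset_sum _ fun j _ => (continuous_const.mul (continuous_apply j))

lemma poly_closed (A : Matrix (Fin mA) (Fin n) ℝ) (b : Fin mA → ℝ)
    (B : Matrix (Fin mB) (Fin n) ℝ) (d : Fin mB → ℝ) :
    IsClosed {x | A.mulVec x = b ∧ ∀ i, B.mulVec x i ≤ d i} := by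
  have : {x | A.mulVec x = b ∧ ∀ i, B.mulVec x i ≤ d i} =
      (⋂ i, {x | A.mulVec x i = b i}) ∩ ⋂ i, {x | B.mulVec x i ≤ d i} := by
    ext x
    simp only [Set.mem_setOf_eq, Set.mem_inter_iff, Set.mem_iInter, funext_iff]
  rw [this]
  exact IsClosed.inter
    (isClosed_iInter fun i => isClosed_eq (mulVec_continuous A i) continuous_const)
    (isClosed_iInter fun i => isClosed_le (mulVec_continuous B i) continuous_const)

lemma extreme_face {P : Set (Fin n → ℝ)} (hcomp : IsCompact P)
    (c : Fin n → ℝ) (m : ℝ) (hub : ∀ x ∈ P, c ⬝ᵥ x ≤ m) (hex : ∃ z ∈ P, c ⬝ᵥ z = m) :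
    ∃ v ∈ P.extremePoints ℝ, c ⬝ᵥ v = m := by
  classical
  set S : Set (Fin n → ℝ) := {x ∈ P | c ⬝ᵥ x = m} with hS
  have hcont : Continuous fun x : Fin n → ℝ => c ⬝ᵥ x := by
    simp only [dotProduct]
    exact continuous_finset_sum _ fun j _ => (continuous_const.mul (continuous_apply j))
  have hScomp : IsCompact S := by
    apply hcomp.of_isClosed_subset
      (hcomp.isClosed.inter (isClosed_eq hcont continuous_const)) (fun x hx => hx.1)
  have hSne : S.Nonempty := by obtain ⟨z, hz, hzm⟩ := hex; exact ⟨z, hz, hzm⟩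
  obtain ⟨v, hv⟩ := hScomp.extremePoints_nonempty hSne
  refine ⟨v, ⟨hv.1.1, ?_⟩, hv.1.2⟩
  intro x1 hx1 x2 hx2 hseg
  have hx1m : c ⬝ᵥ x1 = m ∧ c ⬝ᵥ x2 = m := by
    obtain ⟨s, t, hs, ht, hst, rfl⟩ := hseg
    have h1 : c ⬝ᵥ (s • x1 + t • x2) = s * (c ⬝ᵥ x1) + t * (c ⬝ᵥ x2) := by
      rw [dotProduct_add, dotProduct_smul, dotProduct_smul]; rfl
    have hvm := hv.1.2
    rw [h1] at hvm
    constructor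
    · by_contra hne
      have h2 : c ⬝ᵥ x1 < m := lt_of_le_of_ne (hub _ hx1) hne
      have h3 : c ⬝ᵥ x2 ≤ m := hub _ hx2
      have hm : s * m + t * m = m := by rw [← add_mul, hst, one_mul]
      linarith [mul_lt_mul_of_pos_left h2 hs, mul_le_mul_of_nonneg_left h3 ht.le]
    · by_contra hne
      have h2 : c ⬝ᵥ x2 < m := lt_of_le_of_ne (hub _ hx2) hne
      have h3 : c ⬝ᵥ x1 ≤ m := hub _ hx1
      have hm : s * m + t * m = m := by rw [← add_mul, hst, one_mul]
      linarith [mul_lt_mul_of_pos_left h2 ht, mul_le_mul_of_nonneg_left h3 hs.le]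
  exact hv.2 ⟨hx1, hx1m.1⟩ ⟨hx2, hx1m.2⟩ hseg

lemma poly_box {P : Set (Fin n → ℝ)} (hcomp : IsCompact P) (hne : P.Nonempty)
    (h01 : ∀ v ∈ P.extremePoints ℝ, ∀ j, v j = 0 ∨ v j = 1)
    (extreme_face : ∀ (c : Fin n → ℝ) (m : ℝ), (∀ x ∈ P, c ⬝ᵥ x ≤ m) → (∃ z ∈ P, c ⬝ᵥ z = m) →
      ∃ v ∈ P.extremePoints ℝ, c ⬝ᵥ v = m) :
    ∀ x ∈ P, ∀ j, 0 ≤ x j ∧ x j ≤ 1 := by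
  intro x hx j
  have hcont : ∀ c : Fin n → ℝ, Continuous fun x : Fin n → ℝ => c ⬝ᵥ x := by
    intro c
    simp only [dotProduct]
    exact continuous_finset_sum _ fun j _ => (continuous_const.mul (continuous_apply j))
  constructor
  · -- lower bound via c = -single
    obtain ⟨z, hz, hmax⟩ := hcomp.exists_isMaxOn hne ((hcont (-Pi.single j 1)).continuousOn)
    obtain ⟨v, hv, hvm⟩ := extreme_face (-Pi.single j 1) (-Pi.single j 1 ⬝ᵥ z)
      (fun x hx => hmax hx) ⟨z, hz, rfl⟩
    have h1 : -Pi.single j 1 ⬝ᵥ v = -(v j) := by rw [neg_dotProduct, dot_single]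
    have h2 : -Pi.single j 1 ⬝ᵥ x = -(x j) := by rw [neg_dotProduct, dot_single]
    have h3 : -(x j) ≤ -(v j) := by
      have := hmax hx
      simp only [Set.mem_setOf_eq] at this
      rw [← h2, ← h1, hvm]; exact this
    have h4 : 0 ≤ v j := by rcases h01 v hv j with h | h <;> rw [h] <;> norm_num
    linarith
  · obtain ⟨z, hz, hmax⟩ := hcomp.exists_isMaxOn hne ((hcont (Pi.single j 1)).continuousOn)
    obtain ⟨v, hv, hvm⟩ := extreme_face (Pi.single j 1) (Pi.single j 1 ⬝ᵥ z)
      (fun x hx => hmax hx) ⟨z, hz, rfl⟩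
    rw [dot_single] at hvm
    have h3 : x j ≤ v j := by
      have := hmax hx
      simp only [Set.mem_setOf_eq] at this
      rw [hvm, ← dot_single j x]; exact this
    have h4 : v j ≤ 1 := by rcases h01 v hv j with h | h <;> rw [h] <;> norm_num
    linarith

lemma extreme_of_01 {P : Set (Fin n → ℝ)}
    (hbox : ∀ x ∈ P, ∀ j, 0 ≤ x j ∧ x j ≤ 1)
    {x : Fin n → ℝ} (hx : x ∈ P) (hj : ∀ j, x j = 0 ∨ x j = 1) :
    x ∈ P.extremePoints ℝ := by
  refine ⟨hx, ?_⟩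
  intro x1 hx1 x2 hx2 hseg
  obtain ⟨s, t, hs, ht, hst, hcomb⟩ := hseg
  have heq : x1 = x2 := by
    funext j
    have b1 := hbox x1 hx1 j
    have b2 := hbox x2 hx2 j
    have hcj : s * x1 j + t * x2 j = x j := by
      rw [← hcomb]; rfl
    rcases hj j with h | h
    · rw [h] at hcj
      have h1 : x1 j = 0 := by nlinarith
      have h2 : x2 j = 0 := by nlinarith
      rw [h1, h2]
    · rw [h] at hcj
      have h1 : x1 j = 1 := by nlinarith
      have h2 : x2 j = 1 := by nlinarith
      rw [h1, h2]
  subst heq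
  have : x1 = x := by
    rw [← hcomb, ← add_smul, hst, one_smul]
  exact this

lemma mulVec_comp_add_smul {mB n : ℕ} (M : Matrix (Fin mB) (Fin n) ℝ) (x g : Fin n → ℝ)
    (c : ℝ) (i : Fin mB) :
    M.mulVec (x + c • g) i = M.mulVec x i + c * M.mulVec g i := by
  rw [Matrix.mulVec_add, Matrix.mulVec_smul]
  simp [smul_eq_mul]

lemma blocking_row {mA mB n : ℕ} {A : Matrix (Fin mA) (Fin n) ℝ} {b : Fin mA → ℝ}
    {B : Matrix (Fin mB) (Fin n) ℝ} {d : Fin mB → ℝ}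
    {y0 g : Fin n → ℝ} {α : ℝ}
    (hz : (y0 + α • g) ∈ {x | A.mulVec x = b ∧ ∀ i, B.mulVec x i ≤ d i})
    (hgA : A.mulVec g = 0)
    (hmax : ∀ β : ℝ, α < β → y0 + β • g ∉ {x | A.mulVec x = b ∧ ∀ i, B.mulVec x i ≤ d i}) :
    ∃ i, B.mulVec (y0 + α • g) i = d i ∧ 0 < B.mulVec g i := by
  classical
  by_contra hco
  push_neg at hco
  set z := y0 + α • g with hzdef
  set F : Finset (Fin mB) := Finset.univ.filter (fun i => 0 < B.mulVec g i) with hF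
  have hslack : ∀ i ∈ F, B.mulVec z i < d i := by
    intro i hi
    rcases lt_or_eq_of_le (hz.2 i) with h | h
    · exact h
    · exfalso
      have h2 := hco i h
      have h3 : 0 < B.mulVec g i := (Finset.mem_filter.mp hi).2
      linarith
  set ε : ℝ := if hFe : F.Nonempty then
      min 1 (F.inf' hFe (fun i => (d i - B.mulVec z i)/(B.mulVec g i))) else 1 with hε
  have hεpos : 0 < ε := by
    rw [hε]
    split_ifs with hFe
    · apply lt_min one_pos
      rw [Finset.lt_inf'_iff]
      intro i hi
      have h1 := hslack i hi
      have h2 : 0 < B.mulVec g i := (Finset.mem_filter.mp hi).2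
      exact div_pos (by linarith) h2
    · norm_num
  apply hmax (α + ε) (by linarith)
  have hzε : y0 + (α + ε) • g = z + ε • g := by
    rw [hzdef, add_smul, add_assoc]
  rw [hzε]
  constructor
  · rw [Matrix.mulVec_add, Matrix.mulVec_smul, hgA, hz.1]
    simp
  · intro i
    rw [mulVec_comp_add_smul]
    by_cases hpos : 0 < B.mulVec g i
    · have hiF : i ∈ F := Finset.mem_filter.mpr ⟨Finset.mem_univ _, hpos⟩
      have h1 : ε ≤ (d i - B.mulVec z i)/(B.mulVec g i) := by
        rw [hε, dif_pos ⟨i, hiF⟩]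
        exact le_trans (min_le_right _ _) (Finset.inf'_le _ hiF)
      have h2 := (le_div_iff₀ hpos).mp h1
      linarith
    · push_neg at hpos
      have h3 : ε * B.mulVec g i ≤ 0 := mul_nonpos_of_nonneg_of_nonpos hεpos.le hpos
      linarith [hz.2 i]

lemma mulVec_int {mB n : ℕ} {B : Matrix (Fin mB) (Fin n) ℝ}
    (hB : ∀ i j, B i j = 0 ∨ B i j = 1 ∨ B i j = -1)
    {v : Fin n → ℝ} (hv : ∀ j, v j = 0 ∨ v j = 1) (i : Fin mB) :
    ∃ m : ℤ, B.mulVec v i = (m : ℝ) := by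
  have hterm : ∀ j ∈ Finset.univ, ∃ m : ℤ, B i j * v j = (m : ℝ) := by
    intro j _
    rcases hB i j with h | h | h <;> rcases hv j with h' | h'
    · exact ⟨0, by rw [h, h']; norm_num⟩
    · exact ⟨0, by rw [h, h']; norm_num⟩
    · exact ⟨0, by rw [h, h']; norm_num⟩
    · exact ⟨1, by rw [h, h']; norm_num⟩
    · exact ⟨0, by rw [h, h']; norm_num⟩
    · exact ⟨-1, by rw [h, h']; norm_num⟩
  choose f hf using hterm
  refine ⟨∑ j : Fin n, f j (Finset.mem_univ j), ?_⟩
  have h1 : B.mulVec v i = ∑ j : Fin n, B i j * v j := rfl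
  have h2 : ∑ j : Fin n, B i j * v j = ∑ j : Fin n, ((f j (Finset.mem_univ j) : ℤ) : ℝ) :=
    Finset.sum_congr rfl (fun j _ => hf j (Finset.mem_univ j))
  rw [h1, h2]
  push_cast
  rfl

end CircuitWalkHelpers

theorem circuit_walks_vertex_of_totallyUnimodular_zeroOne
    {mA mB n : ℕ} (A : Matrix (Fin mA) (Fin n) ℝ) (b : Fin mA → ℝ)
    (B : Matrix (Fin mB) (Fin n) ℝ) (d : Fin mB → ℝ)
    (hpointed : ((PolyAB A b B d).extremePoints ℝ).Nonempty)
    (hTU : (Matrix.fromRows A B).IsTotallyUnimodular)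
    (hbounded : Bornology.IsBounded (PolyAB A b B d))
    (h01 : ∀ v ∈ (PolyAB A b B d).extremePoints ℝ, ∀ j, v j = 0 ∨ v j = 1) :
    ∀ (k : ℕ) (y : Fin (k + 1) → Fin n → ℝ),
      IsCircuitWalk (PolyAB A b B d) (IsCircuit A B) y →
        IsVertexWalk (PolyAB A b B d) y := by
  classical
  intro k y hwalk
  obtain ⟨h0, hlast, hstep⟩ := hwalk
  have hconv : Convex ℝ (PolyAB A b B d) := poly_convex A b B d
  have hclosed : IsClosed (PolyAB A b B d) := poly_closed A b B d
  have hcomp : IsCompact (PolyAB A b B d) :=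
    Metric.isCompact_of_isClosed_isBounded hclosed hbounded
  have hne : (PolyAB A b B d).Nonempty := by
    obtain ⟨v0, hv0⟩ := hpointed
    exact ⟨v0, hv0.1⟩
  have hbox : ∀ x ∈ PolyAB A b B d, ∀ j, 0 ≤ x j ∧ x j ≤ 1 :=
    poly_box hcomp hne h01 (fun c m hub hex => extreme_face hcomp c m hub hex)
  have hBent : ∀ i j, B i j = 0 ∨ B i j = 1 ∨ B i j = -1 := by
    intro i j
    obtain ⟨s, hs⟩ := hTU.apply (Sum.inr i) j
    rw [Matrix.fromRows_apply_inr] at hs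
    rcases s with _ | _ | _
    · left; rw [← hs]; rfl
    · right; right; rw [← hs]; rfl
    · right; left; rw [← hs]; rfl
  have hmem : ∀ i : Fin (k+1), y i ∈ PolyAB A b B d := by
    intro i
    by_cases hilast : i = Fin.last k
    · rw [hilast]; exact hlast.1
    · obtain ⟨i', rfl⟩ : ∃ i' : Fin k, i'.castSucc = i :=
        ⟨i.castPred hilast, Fin.castSucc_castPred i hilast⟩
      exact (hstep i').1
  have hmain : ∀ i : Fin (k+1), ∀ j, y i j = 0 ∨ y i j = 1 := by
    intro i
    induction i using Fin.induction with
    | zero => exact h01 _ h0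
    | succ i ih =>
      obtain ⟨hymem, g, α, hcirc, hα, heq, hmax⟩ := hstep i
      obtain ⟨hgA, hgne, hgint, hmin⟩ := hcirc
      obtain ⟨gz, hgz, hgcd⟩ := hgint
      have hzP : y i.succ ∈ PolyAB A b B d := hmem i.succ
      have hzP' : (y i.castSucc + α • g) ∈ PolyAB A b B d := by rw [← heq]; exact hzP
      have hBg : B.mulVec g ≠ 0 := by
        intro hB0
        apply hmax (α + 1) (by linarith)
        constructor
        · rw [Matrix.mulVec_add, Matrix.mulVec_smul, hgA, hymem.1]
          simp
        · intro i2
          rw [mulVec_comp_add_smul, hB0]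
          simpa using hymem.2 i2
      have hBg01 := circuit_Bg_unit A B g hTU hgA hgne ⟨gz, hgz, hgcd⟩ hmin hBg
      obtain ⟨istar, htight, hposg⟩ := blocking_row hzP' hgA hmax
      have hBgistar : B.mulVec g istar = 1 := by
        rcases hBg01 istar with h' | h' | h' <;> first | linarith | exact h'
      -- d istar is an integer
      have hub : ∀ x ∈ PolyAB A b B d, B istar ⬝ᵥ x ≤ d istar := fun x hx => hx.2 istar
      have hex : ∃ zz ∈ PolyAB A b B d, B istar ⬝ᵥ zz = d istar := by
        refine ⟨y i.castSucc + α • g, hzP', ?_⟩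
        exact htight
      obtain ⟨v, hvext, hvm⟩ := extreme_face hcomp (B istar) (d istar) hub hex
      obtain ⟨mv, hmv⟩ := mulVec_int hBent (h01 v hvext) istar
      have hdint : d istar = (mv : ℝ) := by rw [← hvm]; exact hmv
      obtain ⟨my, hmy⟩ := mulVec_int hBent ih istar
      have hαeq : α = (mv : ℝ) - (my : ℝ) := by
        have h5 := mulVec_comp_add_smul B (y i.castSucc) g α istar
        rw [htight, hBgistar, mul_one, hmy, hdint] at h5
        linarith
      obtain ⟨j1, hj1⟩ : ∃ j1, g j1 ≠ 0 := by
        by_contra hco; push_neg at hco; exact hgne (funext hco)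
      have hα1 : α ≤ 1 := by
        have hzj := hbox _ hzP' j1
        have hyj := hbox _ (hmem i.castSucc) j1
        have hzeq : (y i.castSucc + α • g) j1 = y i.castSucc j1 + α * g j1 := rfl
        have hgj1 : (1:ℝ) ≤ g j1 ∨ g j1 ≤ -1 := by
          have hzne : gz j1 ≠ 0 := by
            intro hz0
            apply hj1
            rw [hgz j1, hz0]; norm_num
          rcases lt_or_gt_of_ne hzne with h' | h'
          · right
            have : gz j1 ≤ -1 := by omega
            rw [hgz j1]
            exact_mod_cast this
          · left
            have : 1 ≤ gz j1 := by omega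
            rw [hgz j1]
            exact_mod_cast this
        rcases hgj1 with h' | h'
        · nlinarith [hzj.2, hyj.1]
        · nlinarith [hzj.1, hyj.2]
      have hαone : α = 1 := by
        have hc : α = ((mv - my : ℤ) : ℝ) := by rw [hαeq]; push_cast; ring
        have h1 : 0 < mv - my := by
          have := hα
          rw [hc] at this
          exact_mod_cast this
        have h2 : mv - my ≤ 1 := by
          have := hα1
          rw [hc] at this
          exact_mod_cast this
        have h3 : mv - my = 1 := by omega
        rw [hc, h3]; norm_num
      intro j
      have hzj : y i.succ j = y i.castSucc j + g j := by
        have hcf := congrFun heq j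
        rw [hαone] at hcf
        simpa using hcf
      have hb := hbox _ hzP j
      rcases ih j with h' | h' <;> rw [h', hgz j] at hzj
      · have h0' : (0:ℤ) ≤ gz j := by
          have : (0:ℝ) ≤ (gz j : ℝ) := by
            have := hb.1; rw [hzj] at this; linarith
          exact_mod_cast this
        have h1' : gz j ≤ 1 := by
          have : (gz j : ℝ) ≤ 1 := by
            have := hb.2; rw [hzj] at this; linarith
          exact_mod_cast this
        rcases (by omega : gz j = 0 ∨ gz j = 1) with h'' | h''
        · left; rw [hzj, h'']; norm_num
        · right; rw [hzj, h'']; norm_num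
      · have h0' : (-1:ℤ) ≤ gz j := by
          have : (-1:ℝ) ≤ (gz j : ℝ) := by
            have := hb.1; rw [hzj] at this; linarith
          exact_mod_cast this
        have h1' : gz j ≤ 0 := by
          have : (gz j : ℝ) ≤ 0 := by
            have := hb.2; rw [hzj] at this; linarith
          exact_mod_cast this
        rcases (by omega : gz j = -1 ∨ gz j = 0) with h'' | h''
        · left; rw [hzj, h'']; norm_num
        · right; rw [hzj, h'']; norm_num
  exact fun i => extreme_of_01 hbox (hmem i) (hmain i)
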